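/- Let m, n ≥ 1, let K be a finite field with 2^m elements, let Tr : K → 𝔽₂ be the trace of K over 𝔽₂, and let α₁, …, α_m be a self-dual 𝔽₂-basis of K (Tr(αᵢ αⱼ) = δᵢⱼ). Let β : Kⁿ → 𝔽₂^{n·m} be the 𝔽₂-linear symbolwise expansion map sending x = (x₁,…,xₙ) to the array (xᵢ^{(j)})_{j∈[n], i∈[m]} of coordinates xⱼ = Σᵢ xᵢ^{(j)} αᵢ. Let C ⊆ Kⁿ be a K-linear code and let C^⊥ = {x ∈ Kⁿ : Σⱼ xⱼ yⱼ = 0 for all y ∈ C} be its dual. Then the 𝔽₂-dual of β(C) with respect to the standard dot product on 𝔽₂^{n·m} equals β(C^⊥); in particular, if C^⊥ ⊆ C then β(C)^⊥ = β(C^⊥) ⊆ β(C). -/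

import Mathlib

private lemma kl_trace_mul {m : ℕ} {K : Type*} [Field K] [Algebra (ZMod 2) K]
    (α : Module.Basis (Fin m) (ZMod 2) K)
    (hsd : ∀ i j, Algebra.trace (ZMod 2) K (α i * α j) = if i = j then 1 else 0)
    (a b : K) :
    Algebra.trace (ZMod 2) K (a * b) = ∑ i, α.repr a i * α.repr b i := by
  conv_lhs => rw [← α.sum_repr a, ← α.sum_repr b]
  rw [Finset.sum_mul_sum, map_sum]
  have : ∀ i j, Algebra.trace (ZMod 2) K ((α.repr a i • α i) * (α.repr b j • α j))
      = α.repr a i * α.repr b j * (if i = j then 1 else 0) := by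
    intro i j
    rw [smul_mul_smul_comm, map_smul, hsd, smul_eq_mul]
  simp only [map_sum, this]
  simp [Finset.sum_ite_eq', mul_comm]

private lemma kl_eq_zero {m : ℕ} {K : Type*} [Field K] [Algebra (ZMod 2) K]
    (α : Module.Basis (Fin m) (ZMod 2) K)
    (hsd : ∀ i j, Algebra.trace (ZMod 2) K (α i * α j) = if i = j then 1 else 0)
    (a : K) (h : ∀ c : K, Algebra.trace (ZMod 2) K (c * a) = 0) : a = 0 := by
  have hrepr : ∀ i, α.repr a i = 0 := by
    intro i
    have := h (α i)
    rw [kl_trace_mul α hsd] at this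
    simpa [α.repr_self, Finsupp.single_apply] using this
  have : α.repr a = 0 := by ext i; simp [hrepr]
  simpa using congrArg α.repr.symm this

/-- Kasami–Lin theorem: the binary dual of the symbolwise binary expansion
`β(C)` of a `K`-linear code `C` in a self-dual basis equals `β(C^⊥)`;
in particular, if `C^⊥ ⊆ C` then `β(C)^⊥ = β(C^⊥) ⊆ β(C)`. -/
theorem kasami_lin
    (m n : ℕ) (hm : 1 ≤ m) (hn : 1 ≤ n)
    (K : Type*) [Field K] [Fintype K] [Algebra (ZMod 2) K]
    (hcard : Fintype.card K = 2 ^ m)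
    (α : Module.Basis (Fin m) (ZMod 2) K)
    (hsd : ∀ i j, Algebra.trace (ZMod 2) K (α i * α j) =
      if i = j then 1 else 0)
    (β : (Fin n → K) → (Fin n × Fin m → ZMod 2))
    (hβ : ∀ x p, β x p = α.repr (x p.1) p.2)
    (C : Submodule K (Fin n → K)) :
    {z : Fin n × Fin m → ZMod 2 |
        ∀ y ∈ β '' (C : Set (Fin n → K)), ∑ p, z p * y p = 0}
      = β '' {x | ∀ y ∈ C, ∑ j, x j * y j = 0} ∧
    ((∀ x : Fin n → K, (∀ y ∈ C, ∑ j, x j * y j = 0) → x ∈ C) →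
      β '' {x | ∀ y ∈ C, ∑ j, x j * y j = 0} ⊆ β '' (C : Set (Fin n → K))) := by
  -- key inner-product identity
  have key : ∀ x y : Fin n → K,
      ∑ p : Fin n × Fin m, β x p * β y p
        = Algebra.trace (ZMod 2) K (∑ j, x j * y j) := by
    intro x y
    rw [map_sum]
    rw [Fintype.sum_prod_type]
    refine Finset.sum_congr rfl fun j _ => ?_
    rw [kl_trace_mul α hsd]
    exact Finset.sum_congr rfl fun i _ => by rw [hβ, hβ]
  constructor
  · ext z
    simp only [Set.mem_setOf_eq, Set.mem_image]
    constructor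
    · intro hz
      -- define x with β x = z
      set x : Fin n → K := fun j => ∑ i, z (j, i) • α i with hx
      have hβx : β x = z := by
        funext p
        rw [hβ]
        have : α.repr (x p.1) = ∑ i, z (p.1, i) • α.repr (α i) := by
          rw [hx]; simp [map_sum]
        rw [this]
        simp [α.repr_self, Finsupp.single_apply]
      refine ⟨x, ?_, hβx⟩
      intro y hy
      apply kl_eq_zero α hsd
      intro c
      have hcy : c • y ∈ C := C.smul_mem c hy
      have := hz (β (c • y)) ⟨c • y, hcy, rfl⟩
      rw [← hβx, key x (c • y)] at this
      rw [← this]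
      congr 1
      rw [Finset.mul_sum]
      refine Finset.sum_congr rfl fun j _ => ?_
      simp [Pi.smul_apply, smul_eq_mul]; ring
    · rintro ⟨x, hx, rfl⟩ w ⟨y, hy, rfl⟩
      rw [key x y, hx y hy, map_zero]
  · rintro h w ⟨x, hx, rfl⟩
    exact ⟨x, h x hx, rfl⟩
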